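/- Let (Ω, F, P) be a probability space with a filtration (F_j)_{j≥0}, let L : ℝ^p → ℝ be differentiable with L(θ) ≥ L_inf for all θ, and let (θ_j)_{j≥0} be an (F_j)-adapted sequence of ℝ^p-valued random vectors such that L(θ_j) and ‖∇L(θ_j)‖² are integrable for every j. Let (α_j)_{j≥0} be positive reals with Σ_j α_j = ∞ and Σ_j α_j² < ∞, and suppose there are constants U > 0 and C ≥ 0 such that for every j, E[L(θ_{j+1}) | F_j] ≤ L(θ_j) − α_j U ‖∇L(θ_j)‖² + α_j² C almost surely. For K ∈ ℕ set A_{K+1} = Σ_{j=0}^{K} α_j. Then for every ε > 0, lim_{K→∞} (1/A_{K+1}) Σ_{j=0}^{K} α_j P(‖∇L(θ_j)‖ ≥ ε) = 0; that is, if for each K a random index j(K) ∈ {0, 1, …, K} is drawn (independently of the trajectory given K) with probabilities proportional to (α_j)_{j=0}^{K}, then ‖∇L(θ_{j(K)})‖ → 0 in probability as K → ∞. -/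

import Mathlib

open MeasureTheory Filter
open scoped MeasureTheory

/-- Convergence in probability of the gradient norm at a randomly selected iterate:
for every `ε > 0`, the `(α_j)`-weighted average over `j ∈ {0,…,K}` of
`P(‖∇L(θ_j)‖ ≥ ε)` tends to `0`, i.e. if `j(K)` is sampled with probabilities
proportional to `(α_j)_{j≤K}` then `‖∇L(θ_{j(K)})‖ → 0` in probability. -/
theorem stmt_16 (p : ℕ)
    {Ω : Type*} {m0 : MeasurableSpace Ω} (P : Measure Ω) [IsProbabilityMeasure P]
    (ℱ : Filtration ℕ m0)
    (Lf : EuclideanSpace ℝ (Fin p) → ℝ)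
    (gradL : EuclideanSpace ℝ (Fin p) → EuclideanSpace ℝ (Fin p))
    (hgrad : ∀ x, HasGradientAt Lf (gradL x) x)
    (Linf : ℝ) (hlb : ∀ x, Linf ≤ Lf x)
    (θ : ℕ → Ω → EuclideanSpace ℝ (Fin p))
    (hadapted : Adapted ℱ θ)
    (hLint : ∀ j, Integrable (fun ω => Lf (θ j ω)) P)
    (hGint : ∀ j, Integrable (fun ω => ‖gradL (θ j ω)‖ ^ 2) P)
    (α : ℕ → ℝ) (hαpos : ∀ j, 0 < α j)
    (hdiv : ¬ Summable α) (hsq : Summable (fun j => α j ^ 2))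
    (U C : ℝ) (hU : 0 < U) (hC : 0 ≤ C)
    (hrec : ∀ j, P[fun ω => Lf (θ (j + 1) ω)|ℱ j] ≤ᵐ[P]
      fun ω => Lf (θ j ω) - α j * U * ‖gradL (θ j ω)‖ ^ 2 + α j ^ 2 * C) :
    ∀ ε : ℝ, 0 < ε →
      Tendsto
        (fun K => (1 / (∑ j ∈ Finset.range (K + 1), α j)) *
          ∑ j ∈ Finset.range (K + 1),
            α j * (P {ω | ε ≤ ‖gradL (θ j ω)‖}).toReal)
        atTop (nhds 0) := by
  intro ε hε
  set E : ℕ → ℝ := fun j => ∫ ω, ‖gradL (θ j ω)‖ ^ 2 ∂P with hEdef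
  set e : ℕ → ℝ := fun j => ∫ ω, Lf (θ j ω) ∂P with hedef
  have hEnn : ∀ j, 0 ≤ E j := fun j => integral_nonneg fun ω => sq_nonneg _
  have hstep : ∀ j, e (j + 1) ≤ e j - α j * U * E j + α j ^ 2 * C := by
    intro j
    have hgint : Integrable (fun ω => Lf (θ j ω) - α j * U * ‖gradL (θ j ω)‖ ^ 2
        + α j ^ 2 * C) P :=
      ((hLint j).sub ((hGint j).const_mul _)).add (integrable_const _)
    have h1 : e (j + 1) = ∫ ω, (P[fun ω => Lf (θ (j + 1) ω)|ℱ j]) ω ∂P :=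
      (integral_condExp (ℱ.le j)).symm
    rw [hedef] at h1 ⊢
    simp only [h1]
    calc ∫ ω, (P[fun ω => Lf (θ (j + 1) ω)|ℱ j]) ω ∂P
        ≤ ∫ ω, (Lf (θ j ω) - α j * U * ‖gradL (θ j ω)‖ ^ 2 + α j ^ 2 * C) ∂P :=
          integral_mono_ae integrable_condExp hgint (hrec j)
      _ = e j - α j * U * E j + α j ^ 2 * C := by
          have hi1 : Integrable (fun ω => Lf (θ j ω)
              - α j * U * ‖gradL (θ j ω)‖ ^ 2) P :=
            (hLint j).sub ((hGint j).const_mul _)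
          rw [integral_add hi1 (integrable_const _),
            integral_sub (hLint j) ((hGint j).const_mul _), integral_const,
            integral_const_mul]
          simp [hedef, hEdef]
  have hT : ∀ n, ∑ j ∈ Finset.range n, α j ^ 2 ≤ ∑' j, α j ^ 2 :=
    fun n => Summable.sum_le_tsum _ (fun j _ => sq_nonneg _) hsq
  have htel : ∀ n, U * ∑ j ∈ Finset.range n, α j * E j ≤
      e 0 - e n + C * ∑ j ∈ Finset.range n, α j ^ 2 := by
    intro n
    induction n with
    | zero => simp
    | succ n ih =>
      have := hstep n
      rw [Finset.sum_range_succ, Finset.sum_range_succ]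
      nlinarith [hEnn n, (hαpos n).le]
  have heLinf : ∀ n, Linf ≤ e n := by
    intro n
    have : Linf = ∫ _ω, Linf ∂P := by simp
    rw [this]
    exact integral_mono (integrable_const _) (hLint n) fun ω => hlb _
  set M : ℝ := (e 0 - Linf + C * ∑' j, α j ^ 2) / U with hM
  have hsumE : ∀ n, ∑ j ∈ Finset.range n, α j * E j ≤ M := by
    intro n
    rw [hM, le_div_iff₀ hU]
    calc (∑ j ∈ Finset.range n, α j * E j) * U
        = U * ∑ j ∈ Finset.range n, α j * E j := mul_comm _ _
      _ ≤ e 0 - e n + C * ∑ j ∈ Finset.range n, α j ^ 2 := htel n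
      _ ≤ e 0 - Linf + C * ∑' j, α j ^ 2 := by
          have := heLinf n
          have := hT n
          nlinarith
  -- Chebyshev
  have hcheb : ∀ j, (P {ω | ε ≤ ‖gradL (θ j ω)‖}).toReal ≤ E j / ε ^ 2 := by
    intro j
    have hset : {ω | ε ≤ ‖gradL (θ j ω)‖} = {ω | ε ^ 2 ≤ ‖gradL (θ j ω)‖ ^ 2} := by
      ext ω
      simp only [Set.mem_setOf_eq]
      exact (pow_le_pow_iff_left₀ hε.le (norm_nonneg _) two_ne_zero).symm
    have := mul_meas_ge_le_integral_of_nonneg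
      (f := fun ω => ‖gradL (θ j ω)‖ ^ 2) (μ := P)
      (ae_of_all _ fun ω => sq_nonneg _) (hGint j) (ε ^ 2)
    rw [le_div_iff₀ (pow_pos hε 2), mul_comm]
    rw [hset]
    exact this
  set S : ℕ → ℝ := fun n => ∑ j ∈ Finset.range n,
    α j * (P {ω | ε ≤ ‖gradL (θ j ω)‖}).toReal with hSdef
  have hSnn : ∀ n, 0 ≤ S n := fun n => Finset.sum_nonneg fun j _ =>
    mul_nonneg (hαpos j).le ENNReal.toReal_nonneg
  have hSbd : ∀ n, S n ≤ M / ε ^ 2 := by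
    intro n
    calc S n ≤ ∑ j ∈ Finset.range n, α j * (E j / ε ^ 2) :=
          Finset.sum_le_sum fun j _ =>
            mul_le_mul_of_nonneg_left (hcheb j) (hαpos j).le
      _ = (∑ j ∈ Finset.range n, α j * E j) / ε ^ 2 := by
          rw [Finset.sum_div]; exact Finset.sum_congr rfl fun j _ => by ring
      _ ≤ M / ε ^ 2 := by
          exact div_le_div_of_nonneg_right (hsumE n) (pow_pos hε 2).le |>.trans_eq rfl
  set A : ℕ → ℝ := fun n => ∑ j ∈ Finset.range n, α j with hAdef
  have hAtop : Tendsto (fun K => A (K + 1)) atTop atTop := by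
    have h1 : Tendsto A atTop atTop :=
      (not_summable_iff_tendsto_nat_atTop_of_nonneg fun j => (hαpos j).le).mp hdiv
    exact h1.comp (tendsto_add_atTop_nat 1)
  have hApos : ∀ K, 0 < A (K + 1) := fun K =>
    Finset.sum_pos (fun j _ => hαpos j) ⟨0, Finset.mem_range.2 (Nat.succ_pos K)⟩
  have hinv : Tendsto (fun K => 1 / A (K + 1)) atTop (nhds 0) := by
    simpa only [one_div, Pi.inv_def] using hAtop.inv_tendsto_atTop
  have hub : Tendsto (fun K => (1 / A (K + 1)) * (M / ε ^ 2)) atTop (nhds 0) := by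
    simpa using hinv.mul_const (M / ε ^ 2)
  refine tendsto_of_tendsto_of_tendsto_of_le_of_le tendsto_const_nhds hub ?_ ?_
  · intro K
    exact mul_nonneg (one_div_nonneg.2 (hApos K).le) (hSnn (K + 1))
  · intro K
    exact mul_le_mul_of_nonneg_left (hSbd (K + 1)) (one_div_nonneg.2 (hApos K).le)
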